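/- Let (d, Q, E) be a VASS, C, C' ⊆ {1,…,d}, q, q' ∈ Q, v ∈ ℕ^C, v' ∈ ℕ^{C'} satisfying (Θ1): for every m ≥ 1 there exist v̄ ∈ (ℕ≥m)^{C̄}, v̄' ∈ (ℕ≥m)^{C̄'} and a pseudo-run from (q, v ⊕ v̄) to (q', v' ⊕ v̄') traversing every arc at least m times; and (Θ2): there exist Δ ∈ (ℕ≥1)^C, Δ' ∈ (ℕ≥1)^{C'}, Δ̄ ∈ ℤ^{C̄}, Δ̄' ∈ ℤ^{C̄'} with (q, v ⊕ 0) →*C (q, (v + Δ) ⊕ Δ̄) and (q', (v' + Δ') ⊕ Δ̄') →*C' (q', v' ⊕ 0). Then there exist v̄, δ̄ ∈ ℕ^{C̄}, v̄', δ̄' ∈ ℕ^{C̄'} and M ∈ ℕ such that for every m ≥ M there is a run from (q, v ⊕ (v̄ + m·δ̄)) to (q', v' ⊕ (v̄' + m·δ̄')). -/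

import Mathlib

/-- Vectors in `ℤ^d`. -/
abbrev Vec (d : ℕ) : Type := Fin d → ℤ

/-- An arc of a `d`-dimensional VASS with states `Q`. -/
abbrev Arc (Q : Type) (d : ℕ) : Type := Q × Vec d × Q

/-- `IsRunOn E S π q v q' v'`: the list of arcs `π` (all belonging to `E`) forms a
pseudo-run from `(q, v)` to `(q', v')`, all of whose vectors (including endpoints)
are nonnegative on every coordinate in `S`.  Taking `S = ∅` gives pseudo-runs,
`S = Set.univ` gives runs, and `S = ↑C` gives `C`-runs. -/
inductive IsRunOn {Q : Type} {d : ℕ} (E : Finset (Arc Q d)) (S : Set (Fin d)) :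
    List (Arc Q d) → Q → Vec d → Q → Vec d → Prop
  | nil (q : Q) (v : Vec d) (hv : ∀ i ∈ S, 0 ≤ v i) :
      IsRunOn E S [] q v q v
  | cons (q q' q'' : Q) (v v'' z : Vec d) (π : List (Arc Q d))
      (hv : ∀ i ∈ S, 0 ≤ v i) (he : (q, z, q') ∈ E)
      (ht : IsRunOn E S π q' (v + z) q'' v'') :
      IsRunOn E S ((q, z, q') :: π) q v q'' v''

/-- Glueing: `glue C v w` agrees with `v` on coordinates in `C` and with `w` outside `C`. -/
def glue {d : ℕ} (C : Finset (Fin d)) (v w : Vec d) : Vec d :=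
  fun i => if i ∈ C then v i else w i

section Infra
set_option linter.unusedSectionVars false

open List

variable {Q : Type} {d : ℕ} [DecidableEq Q] {E : Finset (Arc Q d)}

/-- Effect (displacement) of a list of arcs. -/
def eff (π : List (Arc Q d)) : Vec d := (π.map (fun e => e.2.1)).sum

@[simp] lemma eff_nil : eff ([] : List (Arc Q d)) = 0 := rfl

@[simp] lemma eff_cons (e : Arc Q d) (π : List (Arc Q d)) :
    eff (e :: π) = e.2.1 + eff π := by simp [eff]

lemma eff_append (π₁ π₂ : List (Arc Q d)) : eff (π₁ ++ π₂) = eff π₁ + eff π₂ := by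
  simp [eff]

lemma eff_flatten_replicate (N : ℕ) (π : List (Arc Q d)) :
    eff ((List.replicate N π).flatten) = N • eff π := by
  induction N with
  | zero => simp
  | succ n ih =>
      rw [List.replicate_succ, List.flatten_cons, eff_append, ih, succ_nsmul]
      abel

/-- Pointwise minimum of prefix effects. -/
def preMin : List (Arc Q d) → Vec d
  | [] => 0
  | e :: π => fun i => min 0 (e.2.1 i + preMin π i)

lemma preMin_nonpos (π : List (Arc Q d)) (i : Fin d) : preMin π i ≤ 0 := by
  cases π with
  | nil => simp [preMin]
  | cons e π => simp [preMin]

lemma preMin_le {π p : List (Arc Q d)} (h : p <+: π) (i : Fin d) :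
    preMin π i ≤ eff p i := by
  induction π generalizing p with
  | nil =>
      have : p = [] := List.prefix_nil.mp h
      subst this; simp [preMin]
  | cons e π ih =>
      cases p with
      | nil => simpa using preMin_nonpos (e :: π) i
      | cons f p' =>
          obtain ⟨rfl, hp'⟩ := List.cons_prefix_cons.mp h
          have := ih hp'
          simp only [preMin, eff_cons, Pi.add_apply]
          have h2 : preMin π i ≤ eff p' i := this
          omega

lemma IsRunOn.effect {S : Set (Fin d)} {π q v q' v'}
    (h : IsRunOn E S π q v q' v') : v' = v + eff π := by
  induction h with
  | nil q v hv => simp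
  | cons q a b u w z π hv he ht ih => rw [ih, eff_cons]; abel

lemma IsRunOn.mono {S S' : Set (Fin d)} (hss : S' ⊆ S) {π q v q' v'}
    (h : IsRunOn E S π q v q' v') : IsRunOn E S' π q v q' v' := by
  induction h with
  | nil q v hv => exact .nil q v (fun i hi => hv i (hss hi))
  | cons q a b u w z π hv he ht ih =>
      exact .cons q a b u w z π (fun i hi => hv i (hss hi)) he ih

lemma IsRunOn.arcs_mem {S : Set (Fin d)} {π q v q' v'}
    (h : IsRunOn E S π q v q' v') : ∀ e ∈ π, e ∈ E := by
  induction h with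
  | nil => simp
  | cons q a b u w z π hv he ht ih =>
      intro e he'
      rcases List.mem_cons.mp he' with rfl | hm
      · exact he
      · exact ih e hm

lemma IsRunOn.shift0 {π q v q' v'} (h : IsRunOn E ∅ π q v q' v') (t : Vec d) :
    IsRunOn E ∅ π q (v + t) q' (v' + t) := by
  induction h with
  | nil q v hv => exact .nil q (v + t) (by simp)
  | cons q a b u w z π hv he ht ih =>
      refine .cons q a b (u + t) (w + t) z π (by simp) he ?_
      have : u + t + z = u + z + t := by abel
      rw [this]; exact ih

lemma IsRunOn.append0 {π₁ π₂ q v q' v' q'' v''}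
    (h₁ : IsRunOn E ∅ π₁ q v q' v') (h₂ : IsRunOn E ∅ π₂ q' v' q'' v'') :
    IsRunOn E ∅ (π₁ ++ π₂) q v q'' v'' := by
  revert h₂
  induction h₁ with
  | nil q v hv => intro h₂; simpa using h₂
  | cons q a b u w z π hv he ht ih =>
      intro h₂
      exact .cons q a q'' u v'' z (π ++ π₂) (by simp) he (ih h₂)

lemma IsRunOn.split0 {π₁ π₂ q v q'' v''}
    (h : IsRunOn E ∅ (π₁ ++ π₂) q v q'' v'') :
    ∃ q' v', IsRunOn E ∅ π₁ q v q' v' ∧ IsRunOn E ∅ π₂ q' v' q'' v'' := by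
  induction π₁ generalizing q v with
  | nil => exact ⟨q, v, .nil q v (by simp), by simpa using h⟩
  | cons e π₁ ih =>
      obtain ⟨a, z, b⟩ := e
      rw [List.cons_append] at h
      cases h with
      | cons _ _ _ _ _ _ _ hv he ht =>
          obtain ⟨q', v', hA, hB⟩ := ih ht
          exact ⟨q', v', .cons q b q' v v' z π₁ (by simp) he hA, hB⟩

/-- endpoint state of a run is determined by the list and starting state. -/
lemma IsRunOn.state_det {π : List (Arc Q d)} {q v q' v' w a b}
    (h : IsRunOn E ∅ π q v q' v') (h' : IsRunOn E ∅ π q w a b) : q' = a := by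
  induction π generalizing q v w with
  | nil => cases h; cases h'; rfl
  | cons e π ih =>
      cases h with
      | cons _ _ _ _ _ _ _ _ he ht =>
          cases h' with
          | cons _ _ _ _ _ _ _ _ he' ht' => exact ih ht ht'

lemma IsRunOn.from0 {π q v q' v'} (h : IsRunOn E ∅ π q v q' v') (u : Vec d) :
    IsRunOn E ∅ π q u q' (u + eff π) := by
  have h2 := h.shift0 (u - v)
  have e1 : v + (u - v) = u := by abel
  have e2 : v' + (u - v) = u + eff π := by rw [h.effect]; abel
  rwa [e1, e2] at h2

lemma IsRunOn.single {e : Arc Q d} (he : e ∈ E) (u : Vec d) :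
    IsRunOn E ∅ [e] e.1 u e.2.2 (u + e.2.1) := by
  obtain ⟨a, z, b⟩ := e
  exact .cons a b b u (u + z) z [] (by simp) he (.nil b (u + z) (by simp))

lemma IsRunOn.repl0 {π q v} (h : IsRunOn E ∅ π q v q (v + eff π)) (N : ℕ) :
    IsRunOn E ∅ ((List.replicate N π).flatten) q v q (v + N • eff π) := by
  induction N with
  | zero => simpa using (IsRunOn.nil q v (by simp) : IsRunOn E ∅ [] q v q v)
  | succ n ih =>
      rw [List.replicate_succ, List.flatten_cons]
      have h2 : IsRunOn E ∅ ((List.replicate n π).flatten) q (v + eff π) q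
          (v + eff π + n • eff π) := by
        have := ih.shift0 (eff π)
        have e1 : v + n • eff π + eff π = v + eff π + n • eff π := by abel
        rwa [e1] at this
      have := h.append0 h2
      have e2 : v + eff π + n • eff π = v + (n + 1) • eff π := by
        rw [succ_nsmul]; abel
      rwa [e2] at this

/-- prefix-nonnegativity predicate. -/
def Ok (S : Set (Fin d)) (v : Vec d) (π : List (Arc Q d)) : Prop :=
  ∀ p, p <+: π → ∀ i ∈ S, 0 ≤ v i + eff p i

lemma IsRunOn.ok_of {S : Set (Fin d)} {π q v q' v'}
    (h : IsRunOn E S π q v q' v') : Ok S v π := by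
  induction h with
  | nil q v hv =>
      intro p hp i hi
      have : p = [] := List.prefix_nil.mp hp
      subst this; simpa using hv i hi
  | cons q a b u w z π hv he ht ih =>
      intro p hp i hi
      cases p with
      | nil => simpa using hv i hi
      | cons f p' =>
          obtain ⟨rfl, hp'⟩ := List.cons_prefix_cons.mp hp
          have := ih p' hp' i hi
          simp only [eff_cons, Pi.add_apply] at this ⊢
          omega

lemma IsRunOn.of_ok {π q v q' v'} (h : IsRunOn E ∅ π q v q' v')
    {S : Set (Fin d)} (hok : Ok S v π) : IsRunOn E S π q v q' v' := by
  induction h with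
  | nil q v hv =>
      exact .nil q v (fun i hi => by simpa using hok [] (by simp) i hi)
  | cons q a b u w z π hv he ht ih =>
      refine .cons q a b u w z π (fun i hi => by simpa using hok [] (by simp) i hi) he (ih ?_)
      intro p hp i hi
      have := hok ((q, z, a) :: p) (List.cons_prefix_cons.mpr ⟨rfl, hp⟩) i hi
      simp only [eff_cons, Pi.add_apply] at this ⊢
      omega

lemma prefix_append_cases {α : Type*} {p l₁ l₂ : List α} (h : p <+: l₁ ++ l₂) :
    p <+: l₁ ∨ ∃ p', p = l₁ ++ p' ∧ p' <+: l₂ := by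
  induction l₁ generalizing p with
  | nil => right; exact ⟨p, by simpa using h⟩
  | cons a l₁ ih =>
      cases p with
      | nil => left; exact List.nil_prefix
      | cons b p' =>
          rw [List.cons_append] at h
          obtain ⟨rfl, hp'⟩ := List.cons_prefix_cons.mp h
          rcases ih hp' with hl | ⟨p'', rfl, hp''⟩
          · left; exact List.cons_prefix_cons.mpr ⟨rfl, hl⟩
          · right; exact ⟨p'', by simp, hp''⟩

lemma ok_append {S : Set (Fin d)} {v : Vec d} {π₁ π₂ : List (Arc Q d)}
    (h₁ : Ok S v π₁) (h₂ : Ok S (v + eff π₁) π₂) : Ok S v (π₁ ++ π₂) := by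
  intro p hp i hi
  rcases prefix_append_cases hp with hl | ⟨p', rfl, hp'⟩
  · exact h₁ p hl i hi
  · have := h₂ p' hp' i hi
    rw [eff_append]
    simp only [Pi.add_apply] at this ⊢
    omega

lemma ok_join {S : Set (Fin d)} {v : Vec d} {π : List (Arc Q d)} (N : ℕ)
    (h : ∀ j, j < N → Ok S (v + j • eff π) π)
    (hend : ∀ i ∈ S, 0 ≤ (v + N • eff π) i) :
    Ok S v ((List.replicate N π).flatten) := by
  induction N generalizing v with
  | zero =>
      intro p hp i hi
      have hp0 : p = [] := List.prefix_nil.mp (by simpa using hp)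
      subst hp0
      simpa using hend i hi
  | succ n ih =>
      rw [List.replicate_succ, List.flatten_cons]
      refine ok_append ?_ (ih ?_ ?_)
      · have := h 0 (Nat.succ_pos n); simpa using this
      · intro j hj
        have := h (j + 1) (by omega)
        have e1 : v + (j + 1) • eff π = v + eff π + j • eff π := by
          rw [succ_nsmul]; abel
        rwa [e1] at this
      · intro i hi
        have := hend i hi
        have e1 : v + (n + 1) • eff π = v + eff π + n • eff π := by
          rw [succ_nsmul]; abel
        rwa [e1] at this

lemma ok_of_preMin {S : Set (Fin d)} {v : Vec d} {π : List (Arc Q d)}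
    (h : ∀ i ∈ S, 0 ≤ v i + preMin π i) : Ok S v π := by
  intro p hp i hi
  have := preMin_le hp i
  have := h i hi
  omega

lemma interp_nonneg (X Y : ℤ) (j N : ℕ) (hj : j ≤ N) (h1 : 0 ≤ X) (h2 : 0 ≤ X + Y) :
    0 ≤ (N : ℤ) * X + (j : ℤ) * Y := by
  have hNj : (0:ℤ) ≤ (N : ℤ) - j := by exact_mod_cast by omega
  nlinarith [mul_nonneg hNj h1, mul_nonneg (by exact_mod_cast Nat.zero_le j : (0:ℤ) ≤ (j:ℤ)) h2]

lemma interp_ge (X Y : ℤ) (j N : ℕ) (hj : j ≤ N) (h1 : 1 ≤ X) (h2 : 1 ≤ X + Y) :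
    (N : ℤ) ≤ (N : ℤ) * X + (j : ℤ) * Y := by
  have hNj : (0:ℤ) ≤ (N : ℤ) - j := by exact_mod_cast by omega
  nlinarith [mul_nonneg hNj (by linarith : (0:ℤ) ≤ X - 1),
    mul_nonneg (by exact_mod_cast Nat.zero_le j : (0:ℤ) ≤ (j:ℤ)) (by linarith : (0:ℤ) ≤ X + Y - 1)]

end Infra

section Infra2
set_option linter.unusedSectionVars false
variable {Q : Type} {d : ℕ} [DecidableEq Q] {E : Finset (Arc Q d)}

lemma IsRunOn.nil_inv {S : Set (Fin d)} {q v q' v'} (h : IsRunOn E S [] q v q' v') :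
    q = q' ∧ v = v' := by cases h; exact ⟨rfl, rfl⟩

end Infra2


section Euler
set_option linter.unusedSectionVars false
set_option maxHeartbeats 1000000

open List

variable {Q : Type} {d : ℕ} [DecidableEq Q] (E : Finset (Arc Q d))

def outZ (c : Arc Q d → ℕ) (u : Q) : ℤ := ∑ e ∈ E, if e.1 = u then (c e : ℤ) else 0
def inZ (c : Arc Q d → ℕ) (u : Q) : ℤ := ∑ e ∈ E, if e.2.2 = u then (c e : ℤ) else 0
def tot (c : Arc Q d → ℕ) : ℕ := ∑ e ∈ E, c e

variable {E}

lemma outZ_nonneg (c : Arc Q d → ℕ) (u : Q) : 0 ≤ outZ E c u := by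
  refine Finset.sum_nonneg fun e _ => ?_
  by_cases h : e.1 = u <;> simp [h]

lemma inZ_nonneg (c : Arc Q d → ℕ) (u : Q) : 0 ≤ inZ E c u := by
  refine Finset.sum_nonneg fun e _ => ?_
  by_cases h : e.2.2 = u <;> simp [h]

lemma outZ_add (c c' : Arc Q d → ℕ) (u : Q) :
    outZ E (fun e => c e + c' e) u = outZ E c u + outZ E c' u := by
  unfold outZ
  rw [← Finset.sum_add_distrib]
  refine Finset.sum_congr rfl fun e _ => ?_
  by_cases h : e.1 = u <;> simp [h]

lemma inZ_add (c c' : Arc Q d → ℕ) (u : Q) :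
    inZ E (fun e => c e + c' e) u = inZ E c u + inZ E c' u := by
  unfold inZ
  rw [← Finset.sum_add_distrib]
  refine Finset.sum_congr rfl fun e _ => ?_
  by_cases h : e.2.2 = u <;> simp [h]

lemma outZ_congr {c c' : Arc Q d → ℕ} (h : ∀ f, c f = c' f) (u : Q) :
    outZ E c u = outZ E c' u := by
  unfold outZ; exact Finset.sum_congr rfl fun e _ => by rw [h e]

lemma inZ_congr {c c' : Arc Q d → ℕ} (h : ∀ f, c f = c' f) (u : Q) :
    inZ E c u = inZ E c' u := by
  unfold inZ; exact Finset.sum_congr rfl fun e _ => by rw [h e]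

lemma tot_congr {c c' : Arc Q d → ℕ} (h : ∀ f, c f = c' f) : tot E c = tot E c' := by
  unfold tot; exact Finset.sum_congr rfl fun e _ => h e

lemma tot_add (c c' : Arc Q d → ℕ) : tot E (fun e => c e + c' e) = tot E c + tot E c' := by
  unfold tot; rw [← Finset.sum_add_distrib]

lemma outZ_single {e : Arc Q d} (he : e ∈ E) (u : Q) :
    outZ E (fun f => if f = e then 1 else 0) u = if e.1 = u then 1 else 0 := by
  unfold outZ
  rw [Finset.sum_eq_single_of_mem e he]
  · simp
  · intro f _ hne
    simp [hne]

lemma inZ_single {e : Arc Q d} (he : e ∈ E) (u : Q) :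
    inZ E (fun f => if f = e then 1 else 0) u = if e.2.2 = u then 1 else 0 := by
  unfold inZ
  rw [Finset.sum_eq_single_of_mem e he]
  · simp
  · intro f _ hne
    simp [hne]

lemma tot_single {e : Arc Q d} (he : e ∈ E) :
    tot E (fun f => if f = e then 1 else 0) = 1 := by
  unfold tot
  rw [Finset.sum_eq_single_of_mem e he]
  · simp
  · intro f _ hne
    simp [hne]

lemma count_cons_eq (e f : Arc Q d) (π : List (Arc Q d)) :
    (e :: π).count f = π.count f + (if f = e then 1 else 0) := by
  by_cases h : f = e
  · subst h; simp [List.count_cons_self]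
  · simp [List.count_cons, h, Ne.symm h]

lemma walk_bal {π : List (Arc Q d)} {q v q' v'} (h : IsRunOn E ∅ π q v q' v') (u : Q) :
    outZ E (fun f => π.count f) u - inZ E (fun f => π.count f) u
      = (if q = u then 1 else 0) - (if q' = u then 1 else 0) := by
  induction h with
  | nil q v hv => simp [outZ, inZ]
  | cons a b c x w z π hv he ht ih =>
      have hc : ∀ f, ((a, z, b) :: π).count f = π.count f + (if f = (a, z, b) then 1 else 0) :=
        fun f => count_cons_eq _ f π
      rw [outZ_congr hc u, inZ_congr hc u, outZ_add, inZ_add,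
        outZ_single he, inZ_single he]
      have hb : ((a, z, b) : Arc Q d).1 = a := rfl
      have hb2 : ((a, z, b) : Arc Q d).2.2 = b := rfl
      rw [hb, hb2]
      linarith [ih]

lemma posarc {c : Arc Q d → ℕ} {u : Q} (h : 0 < outZ E c u) :
    ∃ e ∈ E, e.1 = u ∧ 1 ≤ c e := by
  by_contra hc
  push_neg at hc
  have h0 : outZ E c u = 0 := by
    refine Finset.sum_eq_zero fun e he => ?_
    by_cases h1 : e.1 = u
    · have := hc e he h1
      have hce : c e = 0 := by omega
      simp [h1, hce]
    · simp [h1]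
  omega

lemma outZ_le_tot (c : Arc Q d → ℕ) (u : Q) : outZ E c u ≤ (tot E c : ℤ) := by
  unfold outZ tot
  push_cast
  refine Finset.sum_le_sum fun e _ => ?_
  by_cases h : e.1 = u <;> simp [h]

lemma ret : ∀ (n : ℕ) (c : Arc Q d → ℕ), tot E c ≤ n →
    (∀ f, c f ≠ 0 → f ∈ E) → ∀ s t : Q,
    (∀ u, outZ E c u - inZ E c u = (if s = u then 1 else 0) - (if t = u then 1 else 0)) →
    ∃ θ, IsRunOn E ∅ θ s 0 t (eff θ) ∧ ∃ rest : Arc Q d → ℕ, ∀ f, c f = θ.count f + rest f := by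
  intro n
  induction n with
  | zero =>
      intro c htot hsupp s t hbal
      by_cases hst : s = t
      · subst hst
        refine ⟨[], .nil s 0 (by simp), c, fun f => by simp⟩
      · exfalso
        have h1 := hbal s
        have h2 := outZ_le_tot (E := E) c s
        have h3 := inZ_nonneg (E := E) c s
        rw [if_pos rfl, if_neg (fun h => hst h.symm)] at h1
        omega
  | succ n ih =>
      intro c htot hsupp s t hbal
      by_cases hst : s = t
      · subst hst
        refine ⟨[], .nil s 0 (by simp), c, fun f => by simp⟩
      · have h1 := hbal s
        have h3 := inZ_nonneg (E := E) c s
        rw [if_pos rfl, if_neg (fun h => hst h.symm)] at h1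
        have hpos : 0 < outZ E c s := by omega
        obtain ⟨e, heE, hes, hce⟩ := posarc hpos
        set c₁ : Arc Q d → ℕ := fun f => c f - (if f = e then 1 else 0) with hc₁
        have hsplit : ∀ f, c f = c₁ f + (if f = e then 1 else 0) := by
          intro f
          by_cases hf : f = e
          · subst hf; simp [hc₁]; omega
          · simp [hc₁, hf]
        have houts : ∀ u, outZ E c u = outZ E c₁ u + (if e.1 = u then 1 else 0) := by
          intro u; rw [outZ_congr hsplit u, outZ_add, outZ_single heE]
        have hins : ∀ u, inZ E c u = inZ E c₁ u + (if e.2.2 = u then 1 else 0) := by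
          intro u; rw [inZ_congr hsplit u, inZ_add, inZ_single heE]
        have hbal₁ : ∀ u, outZ E c₁ u - inZ E c₁ u
            = (if e.2.2 = u then 1 else 0) - (if t = u then 1 else 0) := by
          intro u
          have := hbal u
          rw [houts u, hins u] at this
          rw [← hes] at this
          linarith
        have htot₁ : tot E c₁ + 1 = tot E c := by
          rw [tot_congr hsplit, tot_add, tot_single heE]
        have hsupp₁ : ∀ f, c₁ f ≠ 0 → f ∈ E := by
          intro f hf
          refine hsupp f ?_
          have := hsplit f
          omega
        obtain ⟨θ, hθ, rest, hrest⟩ := ih c₁ (by omega) hsupp₁ e.2.2 t hbal₁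
        refine ⟨e :: θ, ?_, rest, ?_⟩
        · have hsingle := IsRunOn.single (E := E) heE 0
          have hθ' := hθ.from0 (0 + e.2.1)
          have hcomb := hsingle.append0 hθ'
          have hstate : e.1 = s := hes
          rw [hstate] at hcomb
          have heffv : 0 + e.2.1 + eff θ = eff (e :: θ) := by
            rw [eff_cons]; abel
          rw [heffv] at hcomb
          simpa using hcomb
        · intro f
          rw [hsplit f, hrest f, count_cons_eq]
          ring

lemma maxtrail : ∀ (n : ℕ) (c : Arc Q d → ℕ), tot E c ≤ n →
    (∀ f, c f ≠ 0 → f ∈ E) →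
    (∀ u, outZ E c u = inZ E c u) → ∀ x : Q,
    ∃ T rest, (∀ f, c f = T.count f + rest f) ∧ IsRunOn E ∅ T x 0 x (eff T) ∧
      outZ E rest x = 0 ∧ (∀ u, outZ E rest u = inZ E rest u) ∧
      (∀ f, rest f ≠ 0 → f ∈ E) := by
  intro n
  induction n with
  | zero =>
      intro c htot hsupp hbal x
      refine ⟨[], c, fun f => by simp, .nil x 0 (by simp), ?_, hbal, hsupp⟩
      have h2 := outZ_le_tot (E := E) c x
      have h3 := outZ_nonneg (E := E) c x
      omega
  | succ n ih =>
      intro c htot hsupp hbal x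
      by_cases hz : outZ E c x = 0
      · exact ⟨[], c, fun f => by simp, .nil x 0 (by simp), hz, hbal, hsupp⟩
      · have hpos : 0 < outZ E c x := lt_of_le_of_ne (outZ_nonneg (E := E) c x) (Ne.symm hz)
        obtain ⟨e, heE, hes, hce⟩ := posarc hpos
        set c₁ : Arc Q d → ℕ := fun f => c f - (if f = e then 1 else 0) with hc₁
        have hsplit : ∀ f, c f = c₁ f + (if f = e then 1 else 0) := by
          intro f
          by_cases hf : f = e
          · subst hf; simp [hc₁]; omega
          · simp [hc₁, hf]
        have houts : ∀ u, outZ E c u = outZ E c₁ u + (if e.1 = u then 1 else 0) := by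
          intro u; rw [outZ_congr hsplit u, outZ_add, outZ_single heE]
        have hins : ∀ u, inZ E c u = inZ E c₁ u + (if e.2.2 = u then 1 else 0) := by
          intro u; rw [inZ_congr hsplit u, inZ_add, inZ_single heE]
        have hbal₁ : ∀ u, outZ E c₁ u - inZ E c₁ u
            = (if e.2.2 = u then 1 else 0) - (if x = u then 1 else 0) := by
          intro u
          have := hbal u
          rw [houts u, hins u] at this
          rw [← hes]
          linarith
        have htot₁ : tot E c₁ + 1 = tot E c := by
          rw [tot_congr hsplit, tot_add, tot_single heE]
        have hsupp₁ : ∀ f, c₁ f ≠ 0 → f ∈ E := by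
          intro f hf
          refine hsupp f ?_
          have := hsplit f
          omega
        obtain ⟨θ, hθ, rest₁, hrest₁⟩ := ret n c₁ (by omega) hsupp₁ e.2.2 x hbal₁
        have hbalθ := fun u => walk_bal hθ u
        have hrest₁supp : ∀ f, rest₁ f ≠ 0 → f ∈ E := by
          intro f hf
          refine hsupp₁ f ?_
          have := hrest₁ f
          omega
        have hbalrest₁ : ∀ u, outZ E rest₁ u = inZ E rest₁ u := by
          intro u
          have h4 : outZ E c₁ u = outZ E (fun f => θ.count f) u + outZ E rest₁ u := by
            rw [outZ_congr hrest₁ u, outZ_add]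
          have h5 : inZ E c₁ u = inZ E (fun f => θ.count f) u + inZ E rest₁ u := by
            rw [inZ_congr hrest₁ u, inZ_add]
          have hb1 := hbal₁ u
          have hb2 := hbalθ u
          omega
        have htotr : tot E c₁ = tot E (fun f => θ.count f) + tot E rest₁ := by
          rw [tot_congr hrest₁, tot_add]
        obtain ⟨T', rest, hT'c, hT'run, hT'out, hT'bal, hT'supp⟩ :=
          ih rest₁ (by omega) hrest₁supp hbalrest₁ x
        refine ⟨e :: (θ ++ T'), rest, ?_, ?_, ?_, hT'bal, hT'supp⟩
        · intro f
          rw [hsplit f, hrest₁ f, hT'c f, count_cons_eq, List.count_append]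
          ring
        · have hsingle := IsRunOn.single (E := E) heE 0
          have hθ' := hθ.from0 (0 + e.2.1)
          have hT'' := hT'run.from0 (0 + e.2.1 + eff θ)
          have hcomb := hsingle.append0 (hθ'.append0 hT'')
          rw [hes] at hcomb
          have heffv : 0 + e.2.1 + eff θ + eff T' = eff (e :: (θ ++ T')) := by
            rw [eff_cons, eff_append]; abel
          rw [heffv] at hcomb
          simpa using hcomb
        · exact hT'out

variable (E) in
def Visit (T : List (Arc Q d)) (x u : Q) : Prop :=
  ∃ β γ, T = β ++ γ ∧ ∃ w, IsRunOn E ∅ β x 0 u w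

lemma visit_refl (T : List (Arc Q d)) (x : Q) : Visit E T x x :=
  ⟨[], T, rfl, 0, .nil x 0 (by simp)⟩

lemma visit_of_count {T : List (Arc Q d)} {x : Q} {f : Arc Q d}
    (hT : IsRunOn E ∅ T x 0 x (eff T)) (hf : 1 ≤ T.count f) :
    Visit E T x f.2.2 := by
  have hmem : f ∈ T := by
    by_contra hc
    rw [List.count_eq_zero_of_not_mem hc] at hf
    omega
  obtain ⟨l₁, l₂, rfl⟩ := List.append_of_mem hmem
  obtain ⟨m, vm, h₁, h₂⟩ := hT.split0
  obtain ⟨a, z, b⟩ := f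
  cases h₂ with
  | cons _ _ _ _ _ _ _ hv he ht =>
      refine ⟨l₁ ++ [(m, z, b)], l₂, by simp, vm + z, ?_⟩
      exact h₁.append0 (IsRunOn.single he vm)

lemma firstrest : ∀ (α : List (Arc Q d)) (s u : Q) (vα wα : Vec d),
    IsRunOn E ∅ α s vα u wα →
    ∀ (T : List (Arc Q d)) (x : Q) (rest : Arc Q d → ℕ),
    IsRunOn E ∅ T x 0 x (eff T) →
    Visit E T x s →
    (∀ g ∈ α, T.count g + rest g ≠ 0) →
    (∃ g : Arc Q d, g.1 = u ∧ rest g ≠ 0) →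
    ∃ w g, Visit E T x w ∧ g.1 = w ∧ rest g ≠ 0 := by
  intro α
  induction α with
  | nil =>
      intro s u vα wα hα T x rest hT hvis harcs hu
      obtain ⟨g, hg1, hg2⟩ := hu
      cases hα with
      | nil => exact ⟨s, g, hvis, hg1, hg2⟩
  | cons a α ih =>
      intro s u vα wα hα T x rest hT hvis harcs hu
      obtain ⟨p, z, b⟩ := a
      cases hα with
      | cons _ _ _ _ _ _ _ hv he ht =>
          by_cases hra : rest (s, z, b) ≠ 0
          · exact ⟨s, (s, z, b), hvis, rfl, hra⟩
          · push_neg at hra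
            have hTa : 1 ≤ T.count (s, z, b) := by
              have := harcs (s, z, b) List.mem_cons_self
              omega
            have hvisb : Visit E T x b := visit_of_count hT hTa
            exact ih b u _ _ ht T x rest hT hvisb
              (fun g hg => harcs g (List.mem_cons_of_mem _ hg)) hu

lemma IsRunOn.eff_end {π : List (Arc Q d)} {a b : Q} {w : Vec d}
    (h : IsRunOn E ∅ π a 0 b w) : IsRunOn E ∅ π a 0 b (eff π) := by
  have e := h.effect
  have : w = eff π := by rw [e]; simp
  rwa [this] at h

lemma merge : ∀ (n : ℕ) (rest : Arc Q d → ℕ), tot E rest ≤ n →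
    ∀ (c : Arc Q d → ℕ) (T : List (Arc Q d)) (x : Q),
    (∀ f, c f = T.count f + rest f) →
    IsRunOn E ∅ T x 0 x (eff T) →
    (∀ u, outZ E rest u = inZ E rest u) →
    (∀ f, rest f ≠ 0 → f ∈ E) →
    (∀ f, c f ≠ 0 → ∃ α w, IsRunOn E ∅ α x 0 f.1 w ∧ ∀ g ∈ α, c g ≠ 0) →
    ∃ Γ, IsRunOn E ∅ Γ x 0 x (eff Γ) ∧ ∀ f, Γ.count f = c f := by
  intro n
  induction n with
  | zero =>
      intro rest htot c T x hc hT hbal hsupp hconn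
      have hz : ∀ f, rest f = 0 := by
        intro f
        by_cases hf : rest f = 0
        · exact hf
        · exfalso
          have hfE := hsupp f hf
          have h1 : rest f ≤ tot E rest :=
            Finset.single_le_sum (f := fun e => rest e) (fun e _ => Nat.zero_le _) hfE
          omega
      exact ⟨T, hT, fun f => by rw [hc f, hz f]; omega⟩
  | succ n ih =>
      intro rest htot c T x hc hT hbal hsupp hconn
      by_cases hz : ∀ f, rest f = 0
      · exact ⟨T, hT, fun f => by rw [hc f, hz f]; omega⟩
      · push_neg at hz
        obtain ⟨f₀, hf₀⟩ := hz
        have hcf₀ : c f₀ ≠ 0 := by have := hc f₀; omega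
        obtain ⟨α, wα, hα, hαarcs⟩ := hconn f₀ hcf₀
        obtain ⟨w, g, hvis, hg1, hg2⟩ :=
          firstrest α x f₀.1 0 wα hα T x rest hT (visit_refl T x)
            (fun g hg => by have := hc g; have := hαarcs g hg; omega)
            ⟨f₀, rfl, hf₀⟩
        have hgE : g ∈ E := hsupp g hg2
        have hposw : 0 < outZ E rest w := by
          have h1 : (if g.1 = w then (rest g : ℤ) else 0) ≤ outZ E rest w := by
            refine Finset.single_le_sum (f := fun e => if e.1 = w then (rest e : ℤ) else 0)
              (fun e _ => by by_cases h : e.1 = w <;> simp [h]) hgE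
          rw [if_pos hg1] at h1
          have : 1 ≤ rest g := by omega
          have : (1 : ℤ) ≤ (rest g : ℤ) := by exact_mod_cast this
          omega
        obtain ⟨Tu, rest₂, hTu_c, hTu_run, hTu_out, hTu_bal, hTu_supp⟩ :=
          maxtrail (tot E rest) rest (le_refl _) hsupp hbal w
        have hTu_ne : Tu ≠ [] := by
          intro hTu_nil
          subst hTu_nil
          have : ∀ f, rest f = rest₂ f := by intro f; have := hTu_c f; simpa using this
          rw [outZ_congr this w] at hposw
          omega
        have hTu_tot : 1 ≤ tot E (fun f => Tu.count f) := by
          obtain ⟨h0, Tu', rfl⟩ := List.exists_cons_of_ne_nil hTu_ne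
          have h0E : h0 ∈ E := hTu_run.arcs_mem h0 List.mem_cons_self
          have hcnt : 1 ≤ (h0 :: Tu').count h0 := by
            rw [count_cons_eq]
            simp
          calc 1 ≤ (h0 :: Tu').count h0 := hcnt
            _ ≤ tot E (fun f => (h0 :: Tu').count f) :=
              Finset.single_le_sum (f := fun e => (h0 :: Tu').count e)
                (fun e _ => Nat.zero_le _) h0E
        have htot₂ : tot E rest = tot E (fun f => Tu.count f) + tot E rest₂ := by
          rw [tot_congr hTu_c, tot_add]
        -- splice Tu into T at w
        obtain ⟨β, γ, hTsplit, wβ, hβ⟩ := hvis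
        rw [hTsplit] at hT
        obtain ⟨m, vm, hβ', hγ⟩ := hT.split0
        have hmw : m = w := hβ'.state_det hβ
        subst hmw
        have hTuX := hTu_run.from0 vm
        have hγ' := hγ.from0 (vm + eff Tu)
        have hΓ'run := hβ'.append0 (hTuX.append0 hγ')
        have hΓ'run2 := hΓ'run.eff_end
        have hcount : ∀ f, (β ++ (Tu ++ γ)).count f = T.count f + Tu.count f := by
          intro f; rw [hTsplit]; simp [List.count_append]; ring
        have hc₂ : ∀ f, c f = (β ++ (Tu ++ γ)).count f + rest₂ f := by
          intro f; rw [hcount f, hc f, hTu_c f]; ring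
        exact ih rest₂ (by omega) c (β ++ (Tu ++ γ)) x hc₂ hΓ'run2 hTu_bal hTu_supp hconn

lemma eff_eq_sum_count {π : List (Arc Q d)} (h : ∀ e ∈ π, e ∈ E) :
    eff π = ∑ e ∈ E, (π.count e : ℤ) • e.2.1 := by
  induction π with
  | nil => simp
  | cons a π ih =>
      have ha : a ∈ E := h a List.mem_cons_self
      rw [eff_cons, ih (fun e he => h e (List.mem_cons_of_mem _ he))]
      have hterm : ∀ e ∈ E, ((a :: π).count e : ℤ) • e.2.1
          = (π.count e : ℤ) • e.2.1 + (if e = a then e.2.1 else 0) := by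
        intro e _
        rw [count_cons_eq]
        push_cast
        rw [add_smul]
        congr 1
        by_cases he : e = a <;> simp [he]
      rw [Finset.sum_congr rfl hterm, Finset.sum_add_distrib]
      rw [Finset.sum_ite_eq' E a (fun e => e.2.1)]
      rw [if_pos ha]
      abel

lemma outZ_mul (k : ℕ) (c : Arc Q d → ℕ) (u : Q) :
    outZ E (fun e => k * c e) u = (k : ℤ) * outZ E c u := by
  unfold outZ
  rw [Finset.mul_sum]
  refine Finset.sum_congr rfl fun e _ => ?_
  by_cases h : e.1 = u <;> simp [h]

lemma inZ_mul (k : ℕ) (c : Arc Q d → ℕ) (u : Q) :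
    inZ E (fun e => k * c e) u = (k : ℤ) * inZ E c u := by
  unfold inZ
  rw [Finset.mul_sum]
  refine Finset.sum_congr rfl fun e _ => ?_
  by_cases h : e.2.2 = u <;> simp [h]

end Euler


set_option maxHeartbeats 4000000

/-- remark after the proposition: under `Θ1` and `Θ2` there are `v̄, δ̄, v̄', δ̄'`
and `M` such that for all `m ≥ M` there is a run from `(q, v ⊕ (v̄ + m·δ̄))` to
`(q', v' ⊕ (v̄' + m·δ̄'))`. -/

theorem unconstrained_remark {d : ℕ} {Q : Type} [DecidableEq Q]
    (hd : 1 ≤ d) (E : Finset (Arc Q d)) (C C' : Finset (Fin d))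
    (q q' : Q) (v v' : Vec d)
    (hv : ∀ i ∈ C, 0 ≤ v i) (hv' : ∀ i ∈ C', 0 ≤ v' i)
    (h1 : ∀ m : ℕ, 1 ≤ m → ∃ vb vb' : Vec d,
      (∀ i ∉ C, (m : ℤ) ≤ vb i) ∧ (∀ i ∉ C', (m : ℤ) ≤ vb' i) ∧
      ∃ π, IsRunOn E ∅ π q (glue C v vb) q' (glue C' v' vb') ∧
        ∀ e ∈ E, m ≤ π.count e)
    (h2 : ∃ Δ Δ' Δb Δb' : Vec d,
      (∀ i ∈ C, 1 ≤ Δ i) ∧ (∀ i ∈ C', 1 ≤ Δ' i) ∧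
      (∃ π, IsRunOn E ↑C π q (glue C v 0) q (glue C (v + Δ) Δb)) ∧
      (∃ π, IsRunOn E ↑C' π q' (glue C' (v' + Δ') Δb') q' (glue C' v' 0))) :
    ∃ vb δb vb' δb' : Vec d, (∀ i ∉ C, 0 ≤ vb i) ∧ (∀ i ∉ C, 0 ≤ δb i) ∧
      (∀ i ∉ C', 0 ≤ vb' i) ∧ (∀ i ∉ C', 0 ≤ δb' i) ∧
      ∃ M : ℕ, ∀ m : ℕ, M ≤ m →
        ∃ π, IsRunOn E Set.univ π q (glue C v (vb + (m : ℤ) • δb))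
          q' (glue C' v' (vb' + (m : ℤ) • δb')) := by
  classical
  obtain ⟨Δ, Δ', Δb, Δb', hΔ, hΔ', ⟨σ, hσ⟩, ⟨τ, hτ⟩⟩ := h2
  obtain ⟨vb₀, vb₀', hvb₀, hvb₀', b0, hb0, hcnt0⟩ := h1 1 le_rfl
  by_cases hE : E = ∅
  · -- degenerate case: no arcs at all
    have hb0nil : b0 = [] := by
      cases b0 with
      | nil => rfl
      | cons e π =>
          exact absurd (hb0.arcs_mem e List.mem_cons_self) (by simp [hE])
    subst hb0nil
    obtain ⟨hqq, hglue⟩ := hb0.nil_inv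
    refine ⟨vb₀, 0, fun i => glue C v vb₀ i, 0, ?_, ?_, ?_, ?_, 0, ?_⟩
    · intro i hi; linarith [hvb₀ i hi]
    · intro i _; simp
    · intro i hi
      by_cases hic : i ∈ C
      · simp [glue, hic]; exact hv i hic
      · simp [glue, hic]; linarith [hvb₀ i hic]
    · intro i _; simp
    · intro m _
      refine ⟨[], ?_⟩
      have hstart : glue C v (vb₀ + (m : ℤ) • (0 : Vec d)) = glue C v vb₀ := by
        funext i; simp [glue]
      have hend : glue C' v' ((fun i => glue C v vb₀ i) + (m : ℤ) • (0 : Vec d))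
          = glue C v vb₀ := by
        funext i
        by_cases hic : i ∈ C'
        · simp only [glue, if_pos hic]
          have := congrFun hglue i
          simp only [glue, if_pos hic] at this
          exact this.symm
        · simp [glue, hic]
      rw [hstart, hend, ← hqq]
      refine .nil q (glue C v vb₀) ?_
      intro i _
      by_cases hic : i ∈ C
      · simp [glue, hic]; exact hv i hic
      · simp [glue, hic]; linarith [hvb₀ i hic]
  · -- main case
    have hσ0 : IsRunOn E ∅ σ q (glue C v 0) q (glue C (v + Δ) Δb) :=
      hσ.mono (Set.empty_subset _)
    have hτ0 : IsRunOn E ∅ τ q' (glue C' (v' + Δ') Δb') q' (glue C' v' 0) :=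
      hτ.mono (Set.empty_subset _)
    have hσE := hσ0.arcs_mem
    have hτE := hτ0.arcs_mem
    have hb0E := hb0.arcs_mem
    set m₁ : ℕ := 1 + tot E (fun e => b0.count e)
        + (∑ i : Fin d, ((vb₀ i).toNat + (vb₀' i).toNat)) with hm₁def
    obtain ⟨vb₁, vb₁', hvb₁, hvb₁', b1, hb1, hcnt1⟩ := h1 m₁ (by omega)
    have hb1E := hb1.arcs_mem
    have hcntb0_le : ∀ e ∈ E, b0.count e + 1 ≤ m₁ := by
      intro e he
      have h1' : b0.count e ≤ tot E (fun e => b0.count e) :=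
        Finset.single_le_sum (f := fun e => b0.count e) (fun e _ => Nat.zero_le _) he
      omega
    have hvb₀sum : ∀ i : Fin d, (vb₀ i).toNat + (vb₀' i).toNat
        ≤ ∑ j : Fin d, ((vb₀ j).toNat + (vb₀' j).toNat) := by
      intro i
      exact Finset.single_le_sum (f := fun j => ((vb₀ j).toNat + (vb₀' j).toNat))
        (fun j _ => Nat.zero_le _) (Finset.mem_univ i)
    have hvb₀_le : ∀ i, vb₀ i + 1 ≤ (m₁ : ℤ) := by
      intro i
      have h1' := hvb₀sum i
      have h2' : vb₀ i ≤ ((vb₀ i).toNat : ℤ) := Int.self_le_toNat _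
      have h3' : (vb₀ i).toNat + 1 ≤ m₁ := by omega
      have h4' : ((vb₀ i).toNat : ℤ) + 1 ≤ (m₁ : ℤ) := by exact_mod_cast h3'
      linarith
    have hvb₀'_le : ∀ i, vb₀' i + 1 ≤ (m₁ : ℤ) := by
      intro i
      have h1' := hvb₀sum i
      have h2' : vb₀' i ≤ ((vb₀' i).toNat : ℤ) := Int.self_le_toNat _
      have h3' : (vb₀' i).toNat + 1 ≤ m₁ := by omega
      have h4' : ((vb₀' i).toNat : ℤ) + 1 ≤ (m₁ : ℤ) := by exact_mod_cast h3'
      linarith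
    set hdiff : Arc Q d → ℕ := fun e => b1.count e - b0.count e with hdiffdef
    have hdiff_eq : ∀ e, b0.count e + hdiff e = b1.count e := by
      intro e
      by_cases he : e ∈ E
      · have h5 := hcnt1 e he
        have h6 := hcntb0_le e he
        simp only [hdiffdef]
        omega
      · have h0 : b0.count e = 0 := List.count_eq_zero_of_not_mem (fun hm => he (hb0E e hm))
        have h1' : b1.count e = 0 := List.count_eq_zero_of_not_mem (fun hm => he (hb1E e hm))
        simp [hdiffdef, h0, h1']
    have hdiff_ge1 : ∀ e ∈ E, 1 ≤ hdiff e := by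
      intro e he
      have h5 := hcnt1 e he
      have h6 := hcntb0_le e he
      simp only [hdiffdef]
      omega
    have hdiff_zero : ∀ e, e ∉ E → hdiff e = 0 := by
      intro e he
      have h0 : b0.count e = 0 := List.count_eq_zero_of_not_mem (fun hm => he (hb0E e hm))
      have h1' : b1.count e = 0 := List.count_eq_zero_of_not_mem (fun hm => he (hb1E e hm))
      simp [hdiffdef, h0, h1']
    set s : ℕ := 1 + tot E (fun e => σ.count e + τ.count e)
        + (∑ i : Fin d, (|eff σ i| + |eff τ i|).toNat) with hsdef
    have hsστ : ∀ e ∈ E, σ.count e + τ.count e + 1 ≤ s := by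
      intro e he
      have h1' : σ.count e + τ.count e ≤ tot E (fun e => σ.count e + τ.count e) :=
        Finset.single_le_sum (f := fun e => σ.count e + τ.count e) (fun e _ => Nat.zero_le _) he
      omega
    have hsvec : ∀ i, |eff σ i| + |eff τ i| + 1 ≤ (s : ℤ) := by
      intro i
      have h1' : (|eff σ i| + |eff τ i|).toNat
          ≤ ∑ j : Fin d, (|eff σ j| + |eff τ j|).toNat :=
        Finset.single_le_sum (f := fun j => (|eff σ j| + |eff τ j|).toNat)
          (fun j _ => Nat.zero_le _) (Finset.mem_univ i)
      have h2' : |eff σ i| + |eff τ i| = (((|eff σ i| + |eff τ i|).toNat : ℕ) : ℤ) := by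
        rw [Int.toNat_of_nonneg (by positivity)]
      have h3' : (|eff σ i| + |eff τ i|).toNat + 1 ≤ s := by omega
      have h4' : (((|eff σ i| + |eff τ i|).toNat : ℕ) : ℤ) + 1 ≤ (s : ℤ) := by exact_mod_cast h3'
      linarith [h2'.le, h2'.ge]
    have hs1 : 1 ≤ s := by omega
    set cstar : Arc Q d → ℕ := fun e => s * hdiff e - (σ.count e + τ.count e) with hcstardef
    have hcs_eq : ∀ e, cstar e + (σ.count e + τ.count e) = s * hdiff e := by
      intro e
      by_cases he : e ∈ E
      · have h5 := hdiff_ge1 e he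
        have h6 := hsστ e he
        have h7 : s ≤ s * hdiff e := Nat.le_mul_of_pos_right s (by omega)
        simp only [hcstardef]
        omega
      · have h0 : σ.count e = 0 := List.count_eq_zero_of_not_mem (fun hm => he (hσE e hm))
        have h1' : τ.count e = 0 := List.count_eq_zero_of_not_mem (fun hm => he (hτE e hm))
        simp [hcstardef, h0, h1', hdiff_zero e he]
    have hcs_ge1 : ∀ e ∈ E, 1 ≤ cstar e := by
      intro e he
      have h5 := hdiff_ge1 e he
      have h6 := hsστ e he
      have h7 : s ≤ s * hdiff e := Nat.le_mul_of_pos_right s (by omega)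
      have h8 := hcs_eq e
      omega
    have hcs_supp : ∀ f, cstar f ≠ 0 → f ∈ E := by
      intro f hf
      by_contra hfE
      have h0 : σ.count f = 0 := List.count_eq_zero_of_not_mem (fun hm => hfE (hσE f hm))
      have h1' : τ.count f = 0 := List.count_eq_zero_of_not_mem (fun hm => hfE (hτE f hm))
      have h2' := hcs_eq f
      rw [h0, h1', hdiff_zero f hfE] at h2'
      omega
    have hbal_cstar : ∀ u, outZ E cstar u = inZ E cstar u := by
      intro u
      have hwσ := walk_bal hσ0 u
      have hwτ := walk_bal hτ0 u
      have hw0 := walk_bal hb0 u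
      have hw1 := walk_bal hb1 u
      have hout1 : outZ E (fun e => cstar e + (σ.count e + τ.count e)) u
          = outZ E (fun e => s * hdiff e) u := outZ_congr hcs_eq u
      have hin1 : inZ E (fun e => cstar e + (σ.count e + τ.count e)) u
          = inZ E (fun e => s * hdiff e) u := inZ_congr hcs_eq u
      rw [outZ_add, outZ_add, outZ_mul] at hout1
      rw [inZ_add, inZ_add, inZ_mul] at hin1
      have hout2 : outZ E (fun e => b0.count e + hdiff e) u
          = outZ E (fun e => b1.count e) u := outZ_congr hdiff_eq u
      have hin2 : inZ E (fun e => b0.count e + hdiff e) u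
          = inZ E (fun e => b1.count e) u := inZ_congr hdiff_eq u
      rw [outZ_add] at hout2
      rw [inZ_add] at hin2
      have hd2 : outZ E hdiff u - inZ E hdiff u = 0 := by
        have := hw0
        have := hw1
        omega
      have heq : outZ E hdiff u = inZ E hdiff u := by omega
      rw [heq] at hout1
      omega
    have hconn : ∀ f, cstar f ≠ 0 →
        ∃ α w, IsRunOn E ∅ α q 0 f.1 w ∧ ∀ g ∈ α, cstar g ≠ 0 := by
      intro f hf
      have hfE := hcs_supp f hf
      have hcb : 1 ≤ b0.count f := hcnt0 f hfE
      have hmem : f ∈ b0 := by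
        by_contra hc
        rw [List.count_eq_zero_of_not_mem hc] at hcb
        omega
      obtain ⟨l₁, l₂, hb0split⟩ := List.append_of_mem hmem
      have hb0' := hb0.from0 0
      rw [hb0split] at hb0'
      obtain ⟨mm, vm, hl₁, hl₂⟩ := hb0'.split0
      obtain ⟨a, z, b⟩ := f
      have hmm : mm = a := by
        cases hl₂ with
        | cons _ _ _ _ _ _ _ hvx hex htx => rfl
      rw [hmm] at hl₁
      refine ⟨l₁, vm, hl₁, ?_⟩
      intro g hg
      have hgE : g ∈ E := hb0E g (by rw [hb0split]; exact List.mem_append_left _ hg)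
      have := hcs_ge1 g hgE
      omega
    obtain ⟨Γ, hΓrun, hΓcnt⟩ := merge (tot E cstar) cstar le_rfl cstar [] q
      (fun f => by simp) (.nil q 0 (by simp)) hbal_cstar hcs_supp hconn
    have hΓE := hΓrun.arcs_mem
    have hKEY : eff Γ + eff σ + eff τ = (s : ℤ) • (eff b1 - eff b0) := by
      rw [eff_eq_sum_count hΓE, eff_eq_sum_count hσE, eff_eq_sum_count hτE,
        eff_eq_sum_count hb1E, eff_eq_sum_count hb0E]
      rw [← Finset.sum_add_distrib, ← Finset.sum_add_distrib, ← Finset.sum_sub_distrib,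
        Finset.smul_sum]
      refine Finset.sum_congr rfl fun e he => ?_
      rw [hΓcnt e]
      have h1' := hcs_eq e
      have h2' := hdiff_eq e
      have h3' : (cstar e : ℤ) + σ.count e + τ.count e
          = (s : ℤ) * ((b1.count e : ℤ) - (b0.count e : ℤ)) := by
        have hA : (cstar e : ℤ) + ((σ.count e : ℤ) + (τ.count e : ℤ))
            = (s : ℤ) * (hdiff e : ℤ) := by exact_mod_cast h1'
        have hB : (b0.count e : ℤ) + (hdiff e : ℤ) = (b1.count e : ℤ) := by exact_mod_cast h2'
        have hC : (hdiff e : ℤ) = (b1.count e : ℤ) - (b0.count e : ℤ) := by linarith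
        rw [hC] at hA
        linarith
      calc (cstar e : ℤ) • e.2.1 + (σ.count e : ℤ) • e.2.1 + (τ.count e : ℤ) • e.2.1
          = ((cstar e : ℤ) + σ.count e + τ.count e) • e.2.1 := by
            rw [add_smul, add_smul]
        _ = ((s : ℤ) * ((b1.count e : ℤ) - (b0.count e : ℤ))) • e.2.1 := by rw [h3']
        _ = (s : ℤ) • ((b1.count e : ℤ) • e.2.1 - (b0.count e : ℤ) • e.2.1) := by
            rw [mul_smul, sub_smul]
    -- pointwise effect facts
    have hEσ := hσ.effect
    have hEτ := hτ.effect
    have heσC : ∀ i ∈ C, eff σ i = Δ i := by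
      intro i hic
      have h := congrFun hEσ i
      simp only [glue, if_pos hic, Pi.add_apply] at h
      linarith
    have heτC' : ∀ i ∈ C', eff τ i = -(Δ' i) := by
      intro i hic
      have h := congrFun hEτ i
      simp only [glue, if_pos hic, Pi.add_apply] at h
      linarith
    have he0 : ∀ i, glue C v vb₀ i + eff b0 i = glue C' v' vb₀' i := by
      intro i
      have h := congrFun hb0.effect i
      simp only [Pi.add_apply] at h
      linarith
    have he1 : ∀ i, glue C v vb₁ i + eff b1 i = glue C' v' vb₁' i := by
      intro i
      have h := congrFun hb1.effect i
      simp only [Pi.add_apply] at h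
      linarith
    have hKEYi : ∀ i, eff Γ i + eff σ i + eff τ i = (s : ℤ) * (eff b1 i - eff b0 i) := by
      intro i
      have h := congrFun hKEY i
      simpa [Pi.smul_apply, smul_eq_mul] using h
    have hη0 : ∀ i, i ∈ C → i ∈ C' → eff b1 i - eff b0 i = 0 := by
      intro i hic hic'
      have a0 := he0 i
      have a1 := he1 i
      simp only [glue, if_pos hic, if_pos hic'] at a0 a1
      linarith
    have hηpos : ∀ i, i ∈ C → i ∉ C' → 1 ≤ eff b1 i - eff b0 i := by
      intro i hic hic'
      have a0 := he0 i
      have a1 := he1 i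
      simp only [glue, if_pos hic, if_neg hic'] at a0 a1
      have b1' := hvb₁' i hic'
      have b0' := hvb₀'_le i
      linarith
    have hηneg : ∀ i, i ∉ C → i ∈ C' → eff b1 i - eff b0 i ≤ -1 := by
      intro i hic hic'
      have a0 := he0 i
      have a1 := he1 i
      simp only [glue, if_neg hic, if_pos hic'] at a0 a1
      have b1' := hvb₁ i hic
      have b0' := hvb₀_le i
      linarith
    have hscast : (1 : ℤ) ≤ (s : ℤ) := by exact_mod_cast hs1
    have hΔ1 : ∀ i ∈ C, (1 : ℤ) ≤ eff σ i := fun i hi => by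
      rw [heσC i hi]; exact hΔ i hi
    have hXC : ∀ i, i ∈ C → i ∉ C' → 1 ≤ eff σ i + eff Γ i := by
      intro i hic hic'
      have hk := hKEYi i
      have hp := hηpos i hic hic'
      have hsv := hsvec i
      have hsη : (s : ℤ) * 1 ≤ (s : ℤ) * (eff b1 i - eff b0 i) :=
        mul_le_mul_of_nonneg_left hp (by positivity)
      have h5 := le_abs_self (eff τ i)
      have h6 := abs_nonneg (eff σ i)
      linarith
    have hC'big : ∀ i, i ∉ C → i ∈ C' → (s : ℤ) ≤ -((s : ℤ) * (eff b1 i - eff b0 i)) := by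
      intro i hic hic'
      have hn := hηneg i hic hic'
      have hsη : (s : ℤ) * (eff b1 i - eff b0 i) ≤ (s : ℤ) * (-1) :=
        mul_le_mul_of_nonneg_left hn (by positivity)
      linarith
    have hC'coef : ∀ i, i ∉ C → i ∈ C' →
        1 ≤ -((s : ℤ) * (eff b1 i - eff b0 i)) + eff σ i := by
      intro i hic hic'
      have h5 := hC'big i hic hic'
      have hsv := hsvec i
      have h6 := neg_abs_le (eff σ i)
      have h7 := abs_nonneg (eff τ i)
      linarith
    have hC'mid : ∀ i, i ∉ C → i ∈ C' →
        -((s : ℤ) * (eff b1 i - eff b0 i)) + eff σ i + eff Γ i = Δ' i := by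
      intro i hic hic'
      have hk := hKEYi i
      have h5 := heτC' i hic'
      linarith
    have hgCC' : ∀ i, i ∈ C → i ∈ C' → eff Γ i = Δ' i - Δ i := by
      intro i hic hic'
      have hk := hKEYi i
      have h0 := hη0 i hic hic'
      rw [h0, mul_zero] at hk
      have h5 := heτC' i hic'
      have h6 := heσC i hic
      linarith
    -- the vectors
    obtain ⟨Dv, hDv⟩ : ∃ f : Vec d, f = fun i =>
        -(preMin σ i) - preMin Γ i - preMin b0 i - preMin τ i := ⟨_, rfl⟩
    obtain ⟨δbv, hδbv⟩ : ∃ f : Vec d, f = fun i =>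
        if i ∈ C then 0 else if i ∈ C' then -((s : ℤ) * (eff b1 i - eff b0 i))
        else |(s : ℤ) * (eff b1 i - eff b0 i)| + |eff σ i| + |eff τ i| + |eff Γ i| := ⟨_, rfl⟩
    obtain ⟨vbv, hvbv⟩ : ∃ f : Vec d, f = fun i =>
        if i ∈ C then 0 else if i ∈ C' then vb₀ i else Dv i + |eff b0 i| := ⟨_, rfl⟩
    have hDvσ : ∀ i, -(Dv i) ≤ preMin σ i := by
      intro i
      simp only [hDv]
      have g1 := preMin_nonpos Γ i
      have g2 := preMin_nonpos b0 i
      have g3 := preMin_nonpos τ i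
      linarith
    have hDvΓ : ∀ i, -(Dv i) ≤ preMin Γ i := by
      intro i
      simp only [hDv]
      have g1 := preMin_nonpos σ i
      have g2 := preMin_nonpos b0 i
      have g3 := preMin_nonpos τ i
      linarith
    have hDv0 : ∀ i, -(Dv i) ≤ preMin b0 i := by
      intro i
      simp only [hDv]
      have g1 := preMin_nonpos σ i
      have g2 := preMin_nonpos b0 i
      have g3 := preMin_nonpos Γ i
      have g4 := preMin_nonpos τ i
      linarith
    have hDvτ : ∀ i, -(Dv i) ≤ preMin τ i := by
      intro i
      simp only [hDv]
      have g1 := preMin_nonpos σ i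
      have g2 := preMin_nonpos b0 i
      have g3 := preMin_nonpos Γ i
      linarith
    have hDvnn : ∀ i, 0 ≤ Dv i := by
      intro i
      simp only [hDv]
      have g1 := preMin_nonpos σ i
      have g2 := preMin_nonpos b0 i
      have g3 := preMin_nonpos Γ i
      have g4 := preMin_nonpos τ i
      linarith
    obtain ⟨M, hMdef⟩ : ∃ n : ℕ, n = (∑ i : Fin d,
        (Dv i + |eff b0 i| + |v i| + |v' i| + |vb₀ i| + |vb₀' i| + 1).toNat) + 1 := ⟨_, rfl⟩
    have hMi : ∀ i, Dv i + |eff b0 i| + |v i| + |v' i| + |vb₀ i| + |vb₀' i| + 1 ≤ (M : ℤ) := by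
      intro i
      have h1' : (Dv i + |eff b0 i| + |v i| + |v' i| + |vb₀ i| + |vb₀' i| + 1).toNat
          ≤ ∑ j : Fin d, (Dv j + |eff b0 j| + |v j| + |v' j| + |vb₀ j| + |vb₀' j| + 1).toNat :=
        Finset.single_le_sum
          (f := fun j => (Dv j + |eff b0 j| + |v j| + |v' j| + |vb₀ j| + |vb₀' j| + 1).toNat)
          (fun j _ => Nat.zero_le _) (Finset.mem_univ i)
      have h2' := Int.self_le_toNat (Dv i + |eff b0 i| + |v i| + |v' i| + |vb₀ i| + |vb₀' i| + 1)
      have h3' : ((Dv i + |eff b0 i| + |v i| + |v' i| + |vb₀ i| + |vb₀' i| + 1).toNat : ℤ)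
          ≤ ((∑ j : Fin d, (Dv j + |eff b0 j| + |v j| + |v' j| + |vb₀ j| + |vb₀' j| + 1).toNat : ℕ) : ℤ) := by
        exact_mod_cast h1'
      have h4' : ((∑ j : Fin d, (Dv j + |eff b0 j| + |v j| + |v' j| + |vb₀ j| + |vb₀' j| + 1).toNat : ℕ) : ℤ) + 1
          = (M : ℤ) := by exact_mod_cast hMdef.symm
      linarith
    have hδC' : ∀ i, i ∉ C → i ∈ C' →
        δbv i = -((s : ℤ) * (eff b1 i - eff b0 i)) := by
      intro i h1' h2'; simp only [hδbv, if_neg h1', if_pos h2']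
    have hδO : ∀ i, i ∉ C → i ∉ C' →
        δbv i = |(s : ℤ) * (eff b1 i - eff b0 i)| + |eff σ i| + |eff τ i| + |eff Γ i| := by
      intro i h1' h2'; simp only [hδbv, if_neg h1', if_neg h2']
    have hvC' : ∀ i, i ∉ C → i ∈ C' → vbv i = vb₀ i := by
      intro i h1' h2'; simp only [hvbv, if_neg h1', if_pos h2']
    have hvO : ∀ i, i ∉ C → i ∉ C' → vbv i = Dv i + |eff b0 i| := by
      intro i h1' h2'; simp only [hvbv, if_neg h1', if_neg h2']
    refine ⟨vbv, δbv, (fun i => glue C v vbv i + eff b0 i),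
      (fun i => glue C 0 δbv i + (eff σ i + eff Γ i + eff τ i)), ?_, ?_, ?_, ?_, M, ?_⟩
    · intro i hic
      by_cases hic' : i ∈ C'
      · rw [hvC' i hic hic']; linarith [hvb₀ i hic]
      · rw [hvO i hic hic']; have := hDvnn i; positivity
    · intro i hic
      by_cases hic' : i ∈ C'
      · rw [hδC' i hic hic']; linarith [hC'big i hic hic']
      · rw [hδO i hic hic']; positivity
    · intro i hic'
      by_cases hic : i ∈ C
      · have h5 := he0 i
        simp only [glue, if_pos hic, if_neg hic'] at h5 ⊢
        linarith [hvb₀' i hic']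
      · have h5 := he0 i
        simp only [glue, if_neg hic, if_neg hic'] at h5 ⊢
        rw [hvO i hic hic']
        have h6 := neg_abs_le (eff b0 i)
        have h7 := hDvnn i
        linarith
    · intro i hic'
      by_cases hic : i ∈ C
      · simp only [glue, if_pos hic, Pi.zero_apply]
        have hk := hKEYi i
        have hp := hηpos i hic hic'
        have hsη : (s : ℤ) * 1 ≤ (s : ℤ) * (eff b1 i - eff b0 i) :=
          mul_le_mul_of_nonneg_left hp (by positivity)
        linarith
      · simp only [glue, if_neg hic]
        rw [hδO i hic hic']
        have hk := hKEYi i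
        have h5 := neg_abs_le ((s : ℤ) * (eff b1 i - eff b0 i))
        have h6 := abs_nonneg (eff σ i)
        have h7 := abs_nonneg (eff τ i)
        have h8 := abs_nonneg (eff Γ i)
        linarith
    intro m hm
    have hmM : (M : ℤ) ≤ (m : ℤ) := by exact_mod_cast hm
    have hmnn : (0 : ℤ) ≤ (m : ℤ) := by positivity
    set SN : Vec d := glue C v (vbv + (m : ℤ) • δbv) with hSN
    have hSNC : ∀ i ∈ C, SN i = v i := by
      intro i hic; rw [hSN]; simp [glue, hic]
    have hSNn : ∀ i, i ∉ C → SN i = vbv i + (m : ℤ) * δbv i := by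
      intro i hic; rw [hSN]; simp [glue, hic]
    -- phase σ bounds
    have Pσ : ∀ (j : ℕ), j ≤ m → ∀ (p : List (Arc Q d)), p <+: σ →
        ∀ i, 0 ≤ SN i + (j : ℤ) * eff σ i + eff p i := by
      intro j hj p hp i
      have hpre := preMin_le hp i
      by_cases hic : i ∈ C
      · have hok := hσ.ok_of p hp i (Finset.mem_coe.mpr hic)
        simp only [glue, if_pos hic, Pi.add_apply, Pi.zero_apply] at hok
        have h5 := hΔ1 i hic
        have h6 : 0 ≤ (j : ℤ) * eff σ i := mul_nonneg (by positivity) (by linarith)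
        rw [hSNC i hic]
        linarith
      · rw [hSNn i hic]
        by_cases hic' : i ∈ C'
        · rw [hδC' i hic hic', hvC' i hic hic']
          have hint := interp_ge (-((s : ℤ) * (eff b1 i - eff b0 i))) (eff σ i) j m hj
            (by linarith [hC'big i hic hic', hscast]) (hC'coef i hic hic')
          have h5 := hDvσ i
          have h6 := hMi i
          have h8 := hvb₀ i hic
          have h9 := abs_nonneg (eff b0 i)
          have h10 := abs_nonneg (v i)
          have h11 := abs_nonneg (v' i)
          have h12 := abs_nonneg (vb₀ i)
          have h13 := abs_nonneg (vb₀' i)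
          linarith
        · rw [hδO i hic hic', hvO i hic hic']
          have hX : 0 ≤ |(s : ℤ) * (eff b1 i - eff b0 i)| + |eff σ i| + |eff τ i| + |eff Γ i| := by
            positivity
          have hXY : 0 ≤ (|(s : ℤ) * (eff b1 i - eff b0 i)| + |eff σ i| + |eff τ i| + |eff Γ i|)
              + eff σ i := by
            have := neg_abs_le (eff σ i)
            have := abs_nonneg ((s : ℤ) * (eff b1 i - eff b0 i))
            have := abs_nonneg (eff τ i)
            have := abs_nonneg (eff Γ i)
            linarith
          have hint := interp_nonneg
            (|(s : ℤ) * (eff b1 i - eff b0 i)| + |eff σ i| + |eff τ i| + |eff Γ i|)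
            (eff σ i) j m hj hX hXY
          have h5 := hDvσ i
          have h6 := abs_nonneg (eff b0 i)
          have h7 := hDvnn i
          linarith
    -- phase Γ bounds
    have PΓ : ∀ (j : ℕ), j ≤ m → ∀ (p : List (Arc Q d)), p <+: Γ →
        ∀ i, 0 ≤ SN i + (m : ℤ) * eff σ i + (j : ℤ) * eff Γ i + eff p i := by
      intro j hj p hp i
      have hpre := preMin_le hp i
      by_cases hic : i ∈ C
      · rw [hSNC i hic]
        by_cases hic' : i ∈ C'
        · rw [heσC i hic, hgCC' i hic hic']
          have hint := interp_ge (Δ i) (Δ' i - Δ i) j m hj (hΔ i hic)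
            (by have := hΔ' i hic'; linarith)
          have h5 := hDvΓ i
          have h6 := hMi i
          have h7 := hv i hic
          have h8 := abs_nonneg (eff b0 i)
          have h9 := abs_nonneg (v' i)
          have h10 := abs_nonneg (vb₀ i)
          have h11 := abs_nonneg (vb₀' i)
          have h12 := le_abs_self (v i)
          linarith
        · have hint := interp_ge (eff σ i) (eff Γ i) j m hj (hΔ1 i hic) (hXC i hic hic')
          have h5 := hDvΓ i
          have h6 := hMi i
          have h7 := hv i hic
          have h8 := abs_nonneg (eff b0 i)
          have h9 := abs_nonneg (v' i)
          have h10 := abs_nonneg (vb₀ i)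
          have h11 := abs_nonneg (vb₀' i)
          have h12 := le_abs_self (v i)
          linarith
      · rw [hSNn i hic]
        by_cases hic' : i ∈ C'
        · rw [hδC' i hic hic', hvC' i hic hic']
          have hint := interp_ge (-((s : ℤ) * (eff b1 i - eff b0 i)) + eff σ i) (eff Γ i) j m hj
            (hC'coef i hic hic')
            (by have := hC'mid i hic hic'; have := hΔ' i hic'; linarith)
          have hdist : (m : ℤ) * (-((s : ℤ) * (eff b1 i - eff b0 i)) + eff σ i)
              = (m : ℤ) * -((s : ℤ) * (eff b1 i - eff b0 i)) + (m : ℤ) * eff σ i := by ring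
          have h5 := hDvΓ i
          have h6 := hMi i
          have h8 := hvb₀ i hic
          have h9 := abs_nonneg (eff b0 i)
          have h10 := abs_nonneg (v i)
          have h11 := abs_nonneg (v' i)
          have h12 := abs_nonneg (vb₀ i)
          have h13 := abs_nonneg (vb₀' i)
          linarith
        · rw [hδO i hic hic', hvO i hic hic']
          have hX : 0 ≤ (|(s : ℤ) * (eff b1 i - eff b0 i)| + |eff σ i| + |eff τ i| + |eff Γ i|)
              + eff σ i := by
            have := neg_abs_le (eff σ i)
            have := abs_nonneg ((s : ℤ) * (eff b1 i - eff b0 i))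
            have := abs_nonneg (eff τ i)
            have := abs_nonneg (eff Γ i)
            linarith
          have hXY : 0 ≤ ((|(s : ℤ) * (eff b1 i - eff b0 i)| + |eff σ i| + |eff τ i| + |eff Γ i|)
              + eff σ i) + eff Γ i := by
            have := neg_abs_le (eff σ i)
            have := neg_abs_le (eff Γ i)
            have := abs_nonneg ((s : ℤ) * (eff b1 i - eff b0 i))
            have := abs_nonneg (eff τ i)
            linarith
          have hint := interp_nonneg
            ((|(s : ℤ) * (eff b1 i - eff b0 i)| + |eff σ i| + |eff τ i| + |eff Γ i|) + eff σ i)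
            (eff Γ i) j m hj hX hXY
          have hdist : (m : ℤ) * ((|(s : ℤ) * (eff b1 i - eff b0 i)| + |eff σ i| + |eff τ i|
              + |eff Γ i|) + eff σ i)
              = (m : ℤ) * (|(s : ℤ) * (eff b1 i - eff b0 i)| + |eff σ i| + |eff τ i| + |eff Γ i|)
              + (m : ℤ) * eff σ i := by ring
          have h5 := hDvΓ i
          have h6 := abs_nonneg (eff b0 i)
          have h7 := hDvnn i
          linarith
    -- phase b0 bounds
    have P0 : ∀ (p : List (Arc Q d)), p <+: b0 →
        ∀ i, 0 ≤ SN i + (m : ℤ) * eff σ i + (m : ℤ) * eff Γ i + eff p i := by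
      intro p hp i
      have hpre := preMin_le hp i
      by_cases hic : i ∈ C
      · rw [hSNC i hic]
        by_cases hic' : i ∈ C'
        · rw [heσC i hic, hgCC' i hic hic']
          have hmul : (m : ℤ) * 1 ≤ (m : ℤ) * Δ' i :=
            mul_le_mul_of_nonneg_left (hΔ' i hic') hmnn
          have hdist : (m : ℤ) * Δ i + (m : ℤ) * (Δ' i - Δ i) = (m : ℤ) * Δ' i := by ring
          have h5 := hDv0 i
          have h6 := hMi i
          have h7 := hv i hic
          have h8 := abs_nonneg (eff b0 i)
          have h9 := abs_nonneg (v' i)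
          have h10 := abs_nonneg (vb₀ i)
          have h11 := abs_nonneg (vb₀' i)
          have h12 := le_abs_self (v i)
          linarith
        · have hmul : (m : ℤ) * 1 ≤ (m : ℤ) * (eff σ i + eff Γ i) :=
            mul_le_mul_of_nonneg_left (hXC i hic hic') hmnn
          have hdist : (m : ℤ) * (eff σ i + eff Γ i)
              = (m : ℤ) * eff σ i + (m : ℤ) * eff Γ i := by ring
          have h5 := hDv0 i
          have h6 := hMi i
          have h7 := hv i hic
          have h8 := abs_nonneg (eff b0 i)
          have h9 := abs_nonneg (v' i)
          have h10 := abs_nonneg (vb₀ i)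
          have h11 := abs_nonneg (vb₀' i)
          have h12 := le_abs_self (v i)
          linarith
      · rw [hSNn i hic]
        by_cases hic' : i ∈ C'
        · rw [hδC' i hic hic', hvC' i hic hic']
          have hmid := hC'mid i hic hic'
          have hmul : (m : ℤ) * 1 ≤ (m : ℤ)
              * (-((s : ℤ) * (eff b1 i - eff b0 i)) + eff σ i + eff Γ i) := by
            refine mul_le_mul_of_nonneg_left ?_ hmnn
            rw [hmid]
            exact hΔ' i hic'
          have hdist : (m : ℤ) * (-((s : ℤ) * (eff b1 i - eff b0 i)) + eff σ i + eff Γ i)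
              = (m : ℤ) * -((s : ℤ) * (eff b1 i - eff b0 i)) + (m : ℤ) * eff σ i
                + (m : ℤ) * eff Γ i := by ring
          have h5 := hDv0 i
          have h6 := hMi i
          have h8 := hvb₀ i hic
          have h9 := abs_nonneg (eff b0 i)
          have h10 := abs_nonneg (v i)
          have h11 := abs_nonneg (v' i)
          have h12 := abs_nonneg (vb₀ i)
          have h13 := abs_nonneg (vb₀' i)
          linarith
        · rw [hδO i hic hic', hvO i hic hic']
          have hX : 0 ≤ ((|(s : ℤ) * (eff b1 i - eff b0 i)| + |eff σ i| + |eff τ i| + |eff Γ i|)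
              + eff σ i) + eff Γ i := by
            have := neg_abs_le (eff σ i)
            have := neg_abs_le (eff Γ i)
            have := abs_nonneg ((s : ℤ) * (eff b1 i - eff b0 i))
            have := abs_nonneg (eff τ i)
            linarith
          have hmul : 0 ≤ (m : ℤ) * (((|(s : ℤ) * (eff b1 i - eff b0 i)| + |eff σ i| + |eff τ i|
              + |eff Γ i|) + eff σ i) + eff Γ i) := mul_nonneg hmnn hX
          have hdist : (m : ℤ) * (((|(s : ℤ) * (eff b1 i - eff b0 i)| + |eff σ i| + |eff τ i|
              + |eff Γ i|) + eff σ i) + eff Γ i)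
              = (m : ℤ) * (|(s : ℤ) * (eff b1 i - eff b0 i)| + |eff σ i| + |eff τ i| + |eff Γ i|)
              + (m : ℤ) * eff σ i + (m : ℤ) * eff Γ i := by ring
          have h5 := hDv0 i
          have h6 := abs_nonneg (eff b0 i)
          have h7 := hDvnn i
          linarith
    -- value entering the τ phase, on C' coordinates
    have hBτC' : ∀ i ∈ C', SN i + (m : ℤ) * eff σ i + (m : ℤ) * eff Γ i + eff b0 i
        = v' i + (m : ℤ) * Δ' i := by
      intro i hic'
      by_cases hic : i ∈ C
      · rw [hSNC i hic, heσC i hic, hgCC' i hic hic']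
        have h5 := he0 i
        simp only [glue, if_pos hic, if_pos hic'] at h5
        have hdist : (m : ℤ) * Δ i + (m : ℤ) * (Δ' i - Δ i) = (m : ℤ) * Δ' i := by ring
        linarith
      · rw [hSNn i hic, hδC' i hic hic', hvC' i hic hic']
        have h5 := he0 i
        simp only [glue, if_neg hic, if_pos hic'] at h5
        have hmid := hC'mid i hic hic'
        have hdist : (m : ℤ) * -((s : ℤ) * (eff b1 i - eff b0 i)) + (m : ℤ) * eff σ i
            + (m : ℤ) * eff Γ i
            = (m : ℤ) * (-((s : ℤ) * (eff b1 i - eff b0 i)) + eff σ i + eff Γ i) := by ring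
        have hmid2 : (m : ℤ) * (-((s : ℤ) * (eff b1 i - eff b0 i)) + eff σ i + eff Γ i)
            = (m : ℤ) * Δ' i := by rw [hmid]
        linarith
    -- phase τ bounds
    have Pτ : ∀ (j : ℕ), j < m → ∀ (p : List (Arc Q d)), p <+: τ →
        ∀ i, 0 ≤ SN i + (m : ℤ) * eff σ i + (m : ℤ) * eff Γ i + eff b0 i
          + (j : ℤ) * eff τ i + eff p i := by
      intro j hj p hp i
      have hpre := preMin_le hp i
      by_cases hic' : i ∈ C'
      · have hb := hBτC' i hic'
        have hok := hτ.ok_of p hp i (Finset.mem_coe.mpr hic')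
        simp only [glue, if_pos hic', Pi.add_apply] at hok
        have hjm : (j : ℤ) + 1 ≤ (m : ℤ) := by exact_mod_cast hj
        have heτ := heτC' i hic'
        have hnn : 0 ≤ ((m : ℤ) - (j : ℤ) - 1) * Δ' i :=
          mul_nonneg (by linarith) (by linarith [hΔ' i hic'])
        have hr : (m : ℤ) * Δ' i + (j : ℤ) * eff τ i
            = ((m : ℤ) - (j : ℤ) - 1) * Δ' i + Δ' i + ((j : ℤ) - (j : ℤ)) := by
          rw [heτ]; ring
        linarith
      · by_cases hic : i ∈ C
        · rw [hSNC i hic]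
          have hk := hKEYi i
          have hp1 := hηpos i hic hic'
          have hsη : (s : ℤ) * 1 ≤ (s : ℤ) * (eff b1 i - eff b0 i) :=
            mul_le_mul_of_nonneg_left hp1 (by positivity)
          have hint := interp_ge (eff σ i + eff Γ i) (eff τ i) j m (le_of_lt hj)
            (hXC i hic hic') (by linarith)
          have hdist : (m : ℤ) * (eff σ i + eff Γ i)
              = (m : ℤ) * eff σ i + (m : ℤ) * eff Γ i := by ring
          have h5 := hDvτ i
          have h6 := hMi i
          have h7 := hv i hic
          have h8 := neg_abs_le (eff b0 i)
          have h9 := abs_nonneg (v' i)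
          have h10 := abs_nonneg (vb₀ i)
          have h11 := abs_nonneg (vb₀' i)
          have h12 := le_abs_self (v i)
          linarith
        · rw [hSNn i hic, hδO i hic hic', hvO i hic hic']
          have hk := hKEYi i
          have hX : 0 ≤ ((|(s : ℤ) * (eff b1 i - eff b0 i)| + |eff σ i| + |eff τ i| + |eff Γ i|)
              + eff σ i) + eff Γ i := by
            have := neg_abs_le (eff σ i)
            have := neg_abs_le (eff Γ i)
            have := abs_nonneg ((s : ℤ) * (eff b1 i - eff b0 i))
            have := abs_nonneg (eff τ i)
            linarith
          have hXY : 0 ≤ (((|(s : ℤ) * (eff b1 i - eff b0 i)| + |eff σ i| + |eff τ i| + |eff Γ i|)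
              + eff σ i) + eff Γ i) + eff τ i := by
            have h13 := neg_abs_le ((s : ℤ) * (eff b1 i - eff b0 i))
            have := abs_nonneg (eff σ i)
            have := abs_nonneg (eff τ i)
            have := abs_nonneg (eff Γ i)
            linarith
          have hint := interp_nonneg
            (((|(s : ℤ) * (eff b1 i - eff b0 i)| + |eff σ i| + |eff τ i| + |eff Γ i|)
              + eff σ i) + eff Γ i) (eff τ i) j m (le_of_lt hj) hX hXY
          have hdist : (m : ℤ) * (((|(s : ℤ) * (eff b1 i - eff b0 i)| + |eff σ i| + |eff τ i|
              + |eff Γ i|) + eff σ i) + eff Γ i)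
              = (m : ℤ) * (|(s : ℤ) * (eff b1 i - eff b0 i)| + |eff σ i| + |eff τ i| + |eff Γ i|)
              + (m : ℤ) * eff σ i + (m : ℤ) * eff Γ i := by ring
          have h5 := hDvτ i
          have h6 := neg_abs_le (eff b0 i)
          have h7 := hDvnn i
          have h8 := abs_nonneg (eff b0 i)
          linarith
    have hendτ : ∀ i, 0 ≤ SN i + (m : ℤ) * eff σ i + (m : ℤ) * eff Γ i + eff b0 i
        + (m : ℤ) * eff τ i := by
      intro i
      by_cases hic' : i ∈ C'
      · have hb := hBτC' i hic'
        have heτ := heτC' i hic'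
        have hmeτ : (m : ℤ) * eff τ i = -((m : ℤ) * Δ' i) := by rw [heτ]; ring
        have h5 := hv' i hic'
        linarith
      · by_cases hic : i ∈ C
        · rw [hSNC i hic]
          have hk := hKEYi i
          have hp1 := hηpos i hic hic'
          have hsη : (s : ℤ) * 1 ≤ (s : ℤ) * (eff b1 i - eff b0 i) :=
            mul_le_mul_of_nonneg_left hp1 (by positivity)
          have hmul : (m : ℤ) * 1 ≤ (m : ℤ) * (eff σ i + eff Γ i + eff τ i) := by
            refine mul_le_mul_of_nonneg_left ?_ hmnn
            linarith
          have hdist : (m : ℤ) * (eff σ i + eff Γ i + eff τ i)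
              = (m : ℤ) * eff σ i + (m : ℤ) * eff Γ i + (m : ℤ) * eff τ i := by ring
          have h6 := hMi i
          have h7 := hv i hic
          have h8 := neg_abs_le (eff b0 i)
          have h5 := hDvnn i
          have h9 := abs_nonneg (v' i)
          have h10 := abs_nonneg (vb₀ i)
          have h11 := abs_nonneg (vb₀' i)
          have h12 := le_abs_self (v i)
          linarith
        · rw [hSNn i hic, hδO i hic hic', hvO i hic hic']
          have hk := hKEYi i
          have hX : 0 ≤ (|(s : ℤ) * (eff b1 i - eff b0 i)| + |eff σ i| + |eff τ i| + |eff Γ i|)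
              + (eff σ i + eff Γ i + eff τ i) := by
            have h13 := neg_abs_le ((s : ℤ) * (eff b1 i - eff b0 i))
            have := abs_nonneg (eff σ i)
            have := abs_nonneg (eff τ i)
            have := abs_nonneg (eff Γ i)
            linarith
          have hmul : 0 ≤ (m : ℤ) * ((|(s : ℤ) * (eff b1 i - eff b0 i)| + |eff σ i| + |eff τ i|
              + |eff Γ i|) + (eff σ i + eff Γ i + eff τ i)) := mul_nonneg hmnn hX
          have hdist : (m : ℤ) * ((|(s : ℤ) * (eff b1 i - eff b0 i)| + |eff σ i| + |eff τ i|
              + |eff Γ i|) + (eff σ i + eff Γ i + eff τ i))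
              = (m : ℤ) * (|(s : ℤ) * (eff b1 i - eff b0 i)| + |eff σ i| + |eff τ i| + |eff Γ i|)
              + (m : ℤ) * eff σ i + (m : ℤ) * eff Γ i + (m : ℤ) * eff τ i := by ring
          have h5 := hDvnn i
          have h6 := neg_abs_le (eff b0 i)
          have h8 := abs_nonneg (eff b0 i)
          linarith
    -- assemble the run
    refine ⟨(List.replicate m σ).flatten ++ ((List.replicate m Γ).flatten
      ++ (b0 ++ (List.replicate m τ).flatten)), ?_⟩
    have rσ := (hσ0.from0 SN).repl0 m
    have rΓ := (hΓrun.from0 (SN + m • eff σ)).repl0 m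
    have rb0 := hb0.from0 (SN + m • eff σ + m • eff Γ)
    have rτ := (hτ0.from0 (SN + m • eff σ + m • eff Γ + eff b0)).repl0 m
    have rall := rσ.append0 (rΓ.append0 (rb0.append0 rτ))
    have OKσph : Ok Set.univ SN ((List.replicate m σ).flatten) := by
      refine ok_join m ?_ ?_
      · intro j hj p hp i _
        simp only [Pi.add_apply, Pi.smul_apply]
        simp only [nsmul_eq_mul]
        linarith [Pσ j (le_of_lt hj) p hp i]
      · intro i _
        have h5 := Pσ m le_rfl [] List.nil_prefix i
        simp only [eff_nil, Pi.zero_apply, add_zero] at h5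
        simp only [Pi.add_apply, Pi.smul_apply]
        simp only [nsmul_eq_mul]
        linarith
    have OKΓph : Ok Set.univ (SN + m • eff σ) ((List.replicate m Γ).flatten) := by
      refine ok_join m ?_ ?_
      · intro j hj p hp i _
        simp only [Pi.add_apply, Pi.smul_apply]
        simp only [nsmul_eq_mul]
        linarith [PΓ j (le_of_lt hj) p hp i]
      · intro i _
        have h5 := PΓ m le_rfl [] List.nil_prefix i
        simp only [eff_nil, Pi.zero_apply, add_zero] at h5
        simp only [Pi.add_apply, Pi.smul_apply]
        simp only [nsmul_eq_mul]
        linarith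
    have OK0ph : Ok Set.univ (SN + m • eff σ + m • eff Γ) b0 := by
      intro p hp i _
      simp only [Pi.add_apply, Pi.smul_apply]
      simp only [nsmul_eq_mul]
      linarith [P0 p hp i]
    have OKτph : Ok Set.univ (SN + m • eff σ + m • eff Γ + eff b0)
        ((List.replicate m τ).flatten) := by
      refine ok_join m ?_ ?_
      · intro j hj p hp i _
        simp only [Pi.add_apply, Pi.smul_apply]
        simp only [nsmul_eq_mul]
        linarith [Pτ j hj p hp i]
      · intro i _
        simp only [Pi.add_apply, Pi.smul_apply]
        simp only [nsmul_eq_mul]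
        linarith [hendτ i]
    have OKALL : Ok Set.univ SN ((List.replicate m σ).flatten ++ ((List.replicate m Γ).flatten
        ++ (b0 ++ (List.replicate m τ).flatten))) := by
      refine ok_append OKσph ?_
      rw [eff_flatten_replicate]
      refine ok_append OKΓph ?_
      rw [eff_flatten_replicate]
      exact ok_append OK0ph OKτph
    have hrun := rall.of_ok OKALL
    have hENDeq : SN + m • eff σ + m • eff Γ + eff b0 + m • eff τ
        = glue C' v' ((fun i => glue C v vbv i + eff b0 i)
          + (m : ℤ) • (fun i => glue C 0 δbv i + (eff σ i + eff Γ i + eff τ i))) := by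
      funext i
      by_cases hic' : i ∈ C'
      · have hb := hBτC' i hic'
        have heτ := heτC' i hic'
        have hmeτ : (m : ℤ) * eff τ i = -((m : ℤ) * Δ' i) := by rw [heτ]; ring
        simp only [glue, if_pos hic', Pi.add_apply, Pi.smul_apply]
        simp only [nsmul_eq_mul]
        linarith
      · simp only [glue, if_neg hic', Pi.add_apply, Pi.smul_apply]
        simp only [nsmul_eq_mul, smul_eq_mul]
        by_cases hic : i ∈ C
        · simp only [if_pos hic, Pi.zero_apply]
          rw [hSNC i hic]
          ring
        · simp only [if_neg hic]
          rw [hSNn i hic]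
          ring
    rw [← hENDeq]
    exact hrun
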